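/- arXiv:1501.01833 — 8 statements merged into one kernel-verified Lean document; each statement's English description precedes it below -/
import Mathlib

section
/- For any cycle C_n with n ≥ 3, the 1-limited packing number equals ⌊n/3⌋. -/
/-- The closed neighbourhood `N[v] = {v} ∪ N(v)` of a vertex `v`. -/
def SimpleGraph.closedNbhd {V : Type*} (G : SimpleGraph V) (v : V) : Set V :=
  insert v (G.neighborSet v)

/-- A set `X ⊆ V(G)` is a `k`-limited packing if `|N[v] ∩ X| ≤ k` for every vertex `v`. -/
def SimpleGraph.IsLimitedPacking {V : Type*} (G : SimpleGraph V) (k : ℕ) (X : Set V) : Prop :=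
  ∀ v : V, (X ∩ G.closedNbhd v).ncard ≤ k

/-- `L_k(G)`: the maximum cardinality of a `k`-limited packing in `G`. -/
noncomputable def SimpleGraph.limitedPackingNumber {V : Type*} (G : SimpleGraph V) (k : ℕ) : ℕ :=
  sSup {n | ∃ X : Set V, G.IsLimitedPacking k X ∧ X.ncard = n}

open Finset
open scoped Fin.NatCast Fin.CommRing

namespace CycleAux

variable {m : ℕ}

/-- The closed neighbourhood in `cycleGraph (m+3)` as a Finset. -/
def Nf (v : Fin (m + 3)) : Finset (Fin (m + 3)) := {v - 1, v, v + 1}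

lemma mem_Nf {a v : Fin (m + 3)} : a ∈ Nf v ↔ a = v - 1 ∨ a = v ∨ a = v + 1 := by
  simp [Nf]

lemma closedNbhd_eq (v : Fin (m + 3)) :
    (SimpleGraph.cycleGraph (m + 3)).closedNbhd v = ↑(Nf v) := by
  ext a
  simp only [SimpleGraph.closedNbhd, Set.mem_insert_iff, SimpleGraph.mem_neighborSet,
    SimpleGraph.cycleGraph_adj, Finset.mem_coe, mem_Nf]
  constructor
  · rintro (rfl | h | h)
    · right; left; rfl
    · left; linear_combination -h
    · right; right; linear_combination h
  · rintro (rfl | rfl | rfl)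
    · right; left; ring
    · left; rfl
    · right; right; ring

lemma mem_Nf_comm {a v : Fin (m + 3)} : a ∈ Nf v ↔ v ∈ Nf a := by
  simp only [mem_Nf]
  constructor <;> rintro (rfl | rfl | rfl)
  · right; right; ring
  · right; left; rfl
  · left; ring
  · right; right; ring
  · right; left; rfl
  · left; ring

lemma two_ne_zero' : (2 : Fin (m + 3)) ≠ 0 := by
  intro h
  have h2 : ((2 : ℕ) : Fin (m + 3)) = ((0 : ℕ) : Fin (m + 3)) := by exact_mod_cast h
  have h3 := congrArg Fin.val h2
  rw [Fin.val_cast_of_lt (by omega), Fin.val_cast_of_lt (by omega)] at h3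
  exact absurd h3 (by omega)

lemma card_Nf (v : Fin (m + 3)) : (Nf v).card = 3 := by
  rw [Nf, card_insert_of_notMem, card_insert_of_notMem, card_singleton]
  · simp only [mem_singleton]
    intro h
    exact (one_ne_zero (α := Fin (m + 3))) (by linear_combination -h)
  · simp only [mem_insert, mem_singleton]
    rintro (h | h)
    · exact (one_ne_zero (α := Fin (m + 3))) (by linear_combination -h)
    · exact (two_ne_zero' (m := m)) (by linear_combination -h)

lemma ub {X : Set (Fin (m + 3))} (hX : (SimpleGraph.cycleGraph (m + 3)).IsLimitedPacking 1 X) :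
    X.ncard ≤ (m + 3) / 3 := by
  classical
  set Xf := X.toFinset with hXf
  have hset : ∀ v, X ∩ (SimpleGraph.cycleGraph (m + 3)).closedNbhd v = ↑(Xf ∩ Nf v) := by
    intro v; rw [closedNbhd_eq, coe_inter, Set.coe_toFinset]
  have hcard : ∀ v, (Xf ∩ Nf v).card ≤ 1 := by
    intro v; have := hX v; rwa [hset v, Set.ncard_coe_finset] at this
  have hsum : ∑ v : Fin (m + 3), (Xf ∩ Nf v).card = 3 * Xf.card := by
    calc ∑ v : Fin (m + 3), (Xf ∩ Nf v).card
        = ∑ v : Fin (m + 3), ∑ x ∈ Xf, if x ∈ Nf v then 1 else 0 := by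
          refine Finset.sum_congr rfl fun v _ => ?_
          rw [← Finset.filter_mem_eq_inter, Finset.card_filter]
      _ = ∑ x ∈ Xf, ∑ v : Fin (m + 3), if x ∈ Nf v then 1 else 0 := Finset.sum_comm
      _ = ∑ x ∈ Xf, (Nf x).card := by
          refine Finset.sum_congr rfl fun x _ => ?_
          rw [← Finset.card_filter]
          congr 1
          ext v
          simp only [Finset.mem_filter, Finset.mem_univ, true_and]
          exact mem_Nf_comm
      _ = ∑ x ∈ Xf, 3 := by simp [card_Nf]
      _ = 3 * Xf.card := by rw [Finset.sum_const, smul_eq_mul, mul_comm]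
  have hle : 3 * Xf.card ≤ m + 3 := by
    rw [← hsum]
    calc ∑ v : Fin (m + 3), (Xf ∩ Nf v).card ≤ ∑ _v : Fin (m + 3), 1 :=
          Finset.sum_le_sum fun v _ => hcard v
      _ = m + 3 := by simp
  rw [Set.ncard_eq_toFinset_card', ← hXf]
  omega

/-- The packing `{0, 3, 6, …}` of size `⌊(m+3)/3⌋`. -/
def P (m : ℕ) : Finset (Fin (m + 3)) :=
  (Finset.range ((m + 3) / 3)).image (fun i => ((3 * i : ℕ) : Fin (m + 3)))

lemma card_P : (P m).card = (m + 3) / 3 := by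
  rw [P, Finset.card_image_of_injOn, Finset.card_range]
  intro i hi j hj h
  simp only [Finset.coe_range, Set.mem_Iio] at hi hj
  have h2 := congrArg Fin.val h
  rw [Fin.val_cast_of_lt (by omega), Fin.val_cast_of_lt (by omega)] at h2
  omega

lemma exists_p {i : ℕ} {v : Fin (m + 3)} (h : ((3 * i : ℕ) : Fin (m + 3)) ∈ Nf v) :
    ∃ p ≤ 2, ((3 * i + p : ℕ) : Fin (m + 3)) = v + 1 := by
  rw [mem_Nf] at h
  rcases h with h | h | h
  · exact ⟨2, by omega, by push_cast at h ⊢; linear_combination h⟩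
  · exact ⟨1, by omega, by push_cast at h ⊢; linear_combination h⟩
  · exact ⟨0, by omega, by push_cast at h ⊢; linear_combination h⟩

lemma pack_P : (SimpleGraph.cycleGraph (m + 3)).IsLimitedPacking 1 ↑(P m) := by
  intro v
  rw [closedNbhd_eq, ← coe_inter, Set.ncard_coe_finset, Finset.card_le_one]
  intro a ha b hb
  rw [Finset.mem_inter, P, Finset.mem_image] at ha hb
  obtain ⟨⟨i, hi, rfl⟩, haN⟩ := ha
  obtain ⟨⟨j, hj, rfl⟩, hbN⟩ := hb
  rw [Finset.mem_range] at hi hj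
  obtain ⟨p, hp, hpe⟩ := exists_p haN
  obtain ⟨q, hq, hqe⟩ := exists_p hbN
  have h3 := congrArg Fin.val (hpe.trans hqe.symm)
  rw [Fin.val_cast_of_lt (by omega), Fin.val_cast_of_lt (by omega)] at h3
  have hij : i = j := by omega
  rw [hij]

end CycleAux

/-- For any cycle `C_n` with `n ≥ 3`, the 1-limited packing number equals `⌊n/3⌋`. -/
theorem stmt0 (n : ℕ) (hn : 3 ≤ n) :
    (SimpleGraph.cycleGraph n).limitedPackingNumber 1 = n / 3 := by
  obtain ⟨m, rfl⟩ : ∃ m, n = m + 3 := ⟨n - 3, by omega⟩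
  have hmem : (m + 3) / 3 ∈
      {k | ∃ X : Set (Fin (m + 3)),
        (SimpleGraph.cycleGraph (m + 3)).IsLimitedPacking 1 X ∧ X.ncard = k} :=
    ⟨↑(CycleAux.P m), CycleAux.pack_P, by rw [Set.ncard_coe_finset, CycleAux.card_P]⟩
  have hbd : ∀ k ∈ {k | ∃ X : Set (Fin (m + 3)),
      (SimpleGraph.cycleGraph (m + 3)).IsLimitedPacking 1 X ∧ X.ncard = k},
      k ≤ (m + 3) / 3 := by
    rintro k ⟨X, hX, rfl⟩
    exact CycleAux.ub hX
  rw [SimpleGraph.limitedPackingNumber]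
  exact le_antisymm (csSup_le ⟨_, hmem⟩ hbd) (le_csSup ⟨(m + 3) / 3, hbd⟩ hmem)
end

section
/- For any cycle C_n with n ≥ 3, the 2-limited packing number equals ⌊2n/3⌋. -/
open SimpleGraph Finset in
private lemma upperBound_aux (m : ℕ) (X : Set (Fin (m+3)))
    (hX : (cycleGraph (m+3)).IsLimitedPacking 2 X) : X.ncard ≤ 2*(m+3)/3 := by
  classical
  set G := cycleGraph (m+3) with hG
  set X' : Finset (Fin (m+3)) := X.toFinset with hX'
  set N : Fin (m+3) → Finset (Fin (m+3)) := fun v => insert v (G.neighborFinset v) with hN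
  have hNcard : ∀ v, (N v).card = 3 := by
    intro v
    rw [hN]
    rw [Finset.card_insert_of_notMem (G.notMem_neighborFinset_self v)]
    have : G.degree v = 2 := cycleGraph_degree_three_le
    rw [SimpleGraph.degree] at this
    rw [this]
  have hsym : ∀ x v, x ∈ N v ↔ v ∈ N x := by
    intro x v
    simp only [hN, Finset.mem_insert, SimpleGraph.mem_neighborFinset]
    rw [eq_comm, G.adj_comm]
  have hcount : ∀ v, (X' ∩ N v).card ≤ 2 := by
    intro v
    have h1 := hX v
    have hset : X ∩ G.closedNbhd v = ↑(X' ∩ N v) := by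
      ext x
      simp [hX', hN, SimpleGraph.closedNbhd, Set.mem_toFinset]
    rw [hset, Set.ncard_coe_finset] at h1
    exact h1
  have key : 3 * X'.card ≤ 2 * (m+3) := by
    calc 3 * X'.card = ∑ x ∈ X', (N x).card := by
          simp [hNcard, Finset.sum_const, mul_comm]
      _ = ∑ x ∈ X', (Finset.univ.filter (fun v => x ∈ N v)).card := by
          apply Finset.sum_congr rfl
          intro x _
          congr 1
          ext v
          simp only [Finset.mem_filter, Finset.mem_univ, true_and]
          exact (hsym x v).symm
      _ = ∑ x ∈ X', ∑ v : Fin (m+3), (if x ∈ N v then 1 else 0) := by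
          apply Finset.sum_congr rfl
          intro x _
          rw [Finset.card_filter]
      _ = ∑ v : Fin (m+3), ∑ x ∈ X', (if x ∈ N v then 1 else 0) := Finset.sum_comm
      _ = ∑ v : Fin (m+3), (X' ∩ N v).card := by
          apply Finset.sum_congr rfl
          intro v _
          rw [← Finset.card_filter, Finset.filter_mem_eq_inter]
      _ ≤ ∑ _v : Fin (m+3), 2 := Finset.sum_le_sum (fun v _ => hcount v)
      _ = 2 * (m+3) := by simp [Finset.card_univ, mul_comm]
  have hXcard : X.ncard = X'.card := Set.ncard_eq_toFinset_card' X
  rw [hXcard, Nat.le_div_iff_mul_le (by norm_num : 0 < 3)]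
  omega

open Finset in
private lemma cardRange_aux (M : ℕ) :
    ((range M).filter (fun j => j % 3 ≠ 2)).card = M - M/3 := by
  induction M with
  | zero => simp
  | succ M ih =>
    rw [range_add_one, filter_insert]
    by_cases h : M % 3 ≠ 2
    · rw [if_pos h, card_insert_of_notMem (by simp)]
      omega
    · rw [if_neg h]
      omega

private lemma coe_sub_one_aux (m : ℕ) (v : Fin (m+3)) :
    ((v - 1 : Fin (m+3)) : ℕ) = if (v:ℕ) = 0 then m+2 else (v:ℕ) - 1 := by
  rw [Fin.coe_sub_one]
  congr 1
  rw [eq_iff_iff, Fin.ext_iff, Fin.val_zero]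

private lemma val_add_one_aux (m : ℕ) (v : Fin (m+3)) :
    ((v + 1 : Fin (m+3)) : ℕ) = if (v:ℕ) = m+2 then 0 else (v:ℕ) + 1 := by
  rw [Fin.val_add_one]
  congr 1
  rw [eq_iff_iff, Fin.ext_iff, Fin.val_last]

open SimpleGraph Finset in
private lemma lowerBound_aux (m : ℕ) : ∃ X : Set (Fin (m+3)),
    (cycleGraph (m+3)).IsLimitedPacking 2 X ∧ X.ncard = 2*(m+3)/3 := by
  classical
  set X : Set (Fin (m+3)) :=
    {i | (i:ℕ) % 3 ≠ 2 ∧ ((m+3) % 3 = 0 ∨ (i:ℕ) < m+2)} with hXdef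
  have hnotX : ∀ y : Fin (m+3), ((y:ℕ) % 3 = 2 ∨ (y:ℕ) = m+2) → y ∉ X := by
    intro y hy h
    obtain ⟨h1, h2⟩ := h
    rcases hy with hy | hy
    · exact h1 hy
    · rcases h2 with h2 | h2
      · apply h1; omega
      · omega
  refine ⟨X, ?_, ?_⟩
  · -- packing
    intro v
    have hNv : (cycleGraph (m+3)).closedNbhd v = {v-1, v, v+1} := by
      rw [SimpleGraph.closedNbhd, cycleGraph_neighborSet, Set.insert_comm]
    have hlt := v.isLt
    have hd1 : v - 1 ≠ v := by
      intro h; have h2 := congrArg Fin.val h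
      rw [coe_sub_one_aux] at h2; split_ifs at h2 <;> omega
    have hd2 : v ≠ v + 1 := by
      intro h; have h2 := congrArg Fin.val h
      rw [val_add_one_aux] at h2; split_ifs at h2 <;> omega
    have hd3 : v - 1 ≠ v + 1 := by
      intro h; have h2 := congrArg Fin.val h
      rw [coe_sub_one_aux, val_add_one_aux] at h2; split_ifs at h2 <;> omega
    have hN3 : ((cycleGraph (m+3)).closedNbhd v).ncard = 3 := by
      rw [hNv, Set.ncard_insert_of_notMem (by simp [hd1, hd3]),
        Set.ncard_insert_of_notMem (by simp [hd2]), Set.ncard_singleton]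
    obtain ⟨y, hyN, hyX⟩ : ∃ y ∈ (cycleGraph (m+3)).closedNbhd v, y ∉ X := by
      rw [hNv]
      by_cases hv2 : (v:ℕ) % 3 = 2
      · exact ⟨v, by simp, hnotX v (Or.inl hv2)⟩
      by_cases hvlast : (v:ℕ) = m+2
      · exact ⟨v, by simp, hnotX v (Or.inr hvlast)⟩
      by_cases hv1 : (v:ℕ) % 3 = 1
      · refine ⟨v + 1, by simp, hnotX _ (Or.inl ?_)⟩
        rw [val_add_one_aux, if_neg hvlast]; omega
      · refine ⟨v - 1, by simp, hnotX _ ?_⟩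
        rw [coe_sub_one_aux]
        by_cases hv0 : (v:ℕ) = 0
        · rw [if_pos hv0]; right; rfl
        · rw [if_neg hv0]; left; omega
    calc (X ∩ (cycleGraph (m+3)).closedNbhd v).ncard
        ≤ ((cycleGraph (m+3)).closedNbhd v \ {y}).ncard := by
          apply Set.ncard_le_ncard _ (Set.toFinite _)
          rintro x ⟨hx1, hx2⟩
          refine ⟨hx2, ?_⟩
          intro hxy
          rw [Set.mem_singleton_iff] at hxy
          exact hyX (hxy ▸ hx1)
      _ = 3 - 1 := by rw [Set.ncard_diff_singleton_of_mem hyN, hN3]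
      _ ≤ 2 := by norm_num
  · -- cardinality
    have hXfin : X = ↑(Finset.univ.filter
        (fun i : Fin (m+3) => (i:ℕ) % 3 ≠ 2 ∧ ((m+3) % 3 = 0 ∨ (i:ℕ) < m+2))) := by
      ext i; simp [hXdef]
    rw [hXfin, Set.ncard_coe_finset]
    rw [Finset.card_filter]
    rw [Fin.sum_univ_eq_sum_range
      (fun j => if j % 3 ≠ 2 ∧ ((m+3) % 3 = 0 ∨ j < m+2) then 1 else 0)]
    rw [← Finset.card_filter]
    by_cases h3 : (m+3) % 3 = 0
    · have heq : (range (m+3)).filter (fun j => j % 3 ≠ 2 ∧ ((m+3) % 3 = 0 ∨ j < m+2))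
          = (range (m+3)).filter (fun j => j % 3 ≠ 2) := by
        apply Finset.filter_congr
        intro j hj
        simp [h3]
      rw [heq, cardRange_aux]
      omega
    · have heq : (range (m+3)).filter (fun j => j % 3 ≠ 2 ∧ ((m+3) % 3 = 0 ∨ j < m+2))
          = (range (m+2)).filter (fun j => j % 3 ≠ 2) := by
        ext j
        simp only [mem_filter, mem_range]
        constructor
        · rintro ⟨hj, h1, h2⟩; exact ⟨by omega, h1⟩
        · rintro ⟨hj, h1⟩; exact ⟨by omega, h1, by omega⟩
      rw [heq, cardRange_aux]
      omega

/-- For any cycle `C_n` with `n ≥ 3`, the 2-limited packing number equals `⌊2n/3⌋`. -/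
theorem stmt1 (n : ℕ) (hn : 3 ≤ n) :
    (SimpleGraph.cycleGraph n).limitedPackingNumber 2 = 2 * n / 3 := by
  obtain ⟨m, rfl⟩ : ∃ m, n = m + 3 := ⟨n - 3, by omega⟩
  rw [SimpleGraph.limitedPackingNumber]
  have hub : ∀ k ∈ {k | ∃ X : Set (Fin (m+3)),
      (SimpleGraph.cycleGraph (m+3)).IsLimitedPacking 2 X ∧ X.ncard = k}, k ≤ 2*(m+3)/3 := by
    rintro k ⟨X, hX, rfl⟩
    exact upperBound_aux m X hX
  have hmem : 2*(m+3)/3 ∈ {k | ∃ X : Set (Fin (m+3)),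
      (SimpleGraph.cycleGraph (m+3)).IsLimitedPacking 2 X ∧ X.ncard = k} := by
    obtain ⟨X, hX, hcard⟩ := lowerBound_aux m
    exact ⟨X, hX, hcard⟩
  exact le_antisymm (csSup_le ⟨_, hmem⟩ hub) (le_csSup ⟨_, hub⟩ hmem)
end

section
/- Every 2-regular finite graph G satisfies L_2(G) ≥ |V(G)|/2. -/
/-- Every 2-regular finite graph `G` satisfies `L_2(G) ≥ |V(G)|/2`. -/
theorem stmt7 {V : Type*} [Fintype V] (G : SimpleGraph V) [DecidableRel G.Adj]
    (hreg : G.IsRegularOfDegree 2) :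
    Fintype.card V ≤ 2 * G.limitedPackingNumber 2 := by
  classical
  set n := Fintype.card V with hn
  -- maximal independent set
  obtain ⟨I, hI, hmax⟩ := Set.Finite.exists_maximalFor (ι := Set V) id
    {s : Set V | ∀ ⦃a⦄, a ∈ s → ∀ ⦃b⦄, b ∈ s → ¬ G.Adj a b} (Set.toFinite _)
    ⟨∅, by simp⟩
  simp only [Set.mem_setOf_eq] at hI
  -- I dominates
  have hIdom : ∀ v : V, (I ∩ G.closedNbhd v).Nonempty := by
    intro v
    by_cases hv : v ∈ I
    · exact ⟨v, hv, Set.mem_insert _ _⟩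
    · by_contra hcon
      rw [Set.not_nonempty_iff_eq_empty] at hcon
      have hindep : ∀ ⦃a⦄, a ∈ insert v I → ∀ ⦃b⦄, b ∈ insert v I → ¬ G.Adj a b := by
        intro a ha b hb hab
        have hnb : ∀ u ∈ I, ¬ G.Adj v u := by
          intro u hu hadj
          have : u ∈ I ∩ G.closedNbhd v :=
            ⟨hu, Set.mem_insert_of_mem _ ((SimpleGraph.mem_neighborSet _ _ _).mpr hadj)⟩
          rw [hcon] at this; exact this
        rcases ha with rfl | ha
        · rcases hb with rfl | hb
          · exact G.irrefl hab
          · exact hnb b hb hab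
        · rcases hb with rfl | hb
          · exact hnb a ha hab.symm
          · exact hI ha hb hab
      have := hmax (j := insert v I) hindep (Set.subset_insert _ _)
      simp only [id] at this
      exact hv (this (Set.mem_insert v I))
  -- Iᶜ dominates
  have hIcdom : ∀ v : V, (Iᶜ ∩ G.closedNbhd v).Nonempty := by
    intro v
    by_cases hv : v ∈ I
    · have hdeg : G.degree v = 2 := hreg v
      have hne : (G.neighborFinset v).Nonempty := by
        rw [← Finset.card_pos, G.card_neighborFinset_eq_degree, hdeg]; norm_num
      obtain ⟨u, hu⟩ := hne
      rw [SimpleGraph.mem_neighborFinset] at hu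
      have hunotI : u ∉ I := fun huI => hI hv huI hu
      exact ⟨u, hunotI, Set.mem_insert_of_mem _ hu⟩
    · exact ⟨v, hv, Set.mem_insert _ _⟩
  -- pick the smaller of I, Iᶜ
  have hsum : I.ncard + Iᶜ.ncard = n := by
    rw [hn, ← Nat.card_eq_fintype_card]
    exact Set.ncard_add_ncard_compl I
  obtain ⟨Y, hYdom, hYcard⟩ : ∃ Y : Set V,
      (∀ v : V, (Y ∩ G.closedNbhd v).Nonempty) ∧ 2 * Y.ncard ≤ n := by
    by_cases h : 2 * I.ncard ≤ n
    · exact ⟨I, hIdom, h⟩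
    · exact ⟨Iᶜ, hIcdom, by omega⟩
  -- X := Yᶜ is a 2-limited packing
  have hclosed : ∀ v : V, (G.closedNbhd v).ncard = 3 := by
    intro v
    have h2 : (G.neighborSet v).ncard = 2 := by
      have : (G.neighborSet v).toFinset = G.neighborFinset v := rfl
      rw [Set.ncard_eq_toFinset_card', this, G.card_neighborFinset_eq_degree, hreg v]
    rw [SimpleGraph.closedNbhd, Set.ncard_insert_of_notMem (by simp)
      (Set.toFinite _), h2]
  have hpack : G.IsLimitedPacking 2 Yᶜ := by
    intro v
    have hdiff : Yᶜ ∩ G.closedNbhd v = G.closedNbhd v \ Y := by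
      ext x; simp [Set.mem_diff, and_comm]
    have hkey := Set.ncard_inter_add_ncard_diff_eq_ncard (G.closedNbhd v) Y (Set.toFinite _)
    have hnonempty : (G.closedNbhd v ∩ Y).Nonempty := by
      obtain ⟨x, hx1, hx2⟩ := hYdom v; exact ⟨x, hx2, hx1⟩
    have h1 : 1 ≤ (G.closedNbhd v ∩ Y).ncard :=
      (Set.ncard_pos (Set.toFinite _)).mpr hnonempty
    rw [hdiff]
    have := hclosed v
    omega
  -- conclude
  have hmem : Yᶜ.ncard ∈ {m | ∃ X : Set V, G.IsLimitedPacking 2 X ∧ X.ncard = m} :=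
    ⟨Yᶜ, hpack, rfl⟩
  have hbdd : BddAbove {m | ∃ X : Set V, G.IsLimitedPacking 2 X ∧ X.ncard = m} := by
    refine ⟨n, fun m hm => ?_⟩
    obtain ⟨X, _, rfl⟩ := hm
    rw [hn, ← Nat.card_eq_fintype_card, ← Set.ncard_univ V]
    exact Set.ncard_le_ncard (Set.subset_univ X) (Set.toFinite _)
  have hle : Yᶜ.ncard ≤ G.limitedPackingNumber 2 := le_csSup hbdd hmem
  have hsum2 : Y.ncard + Yᶜ.ncard = n := by
    rw [hn, ← Nat.card_eq_fintype_card]; exact Set.ncard_add_ncard_compl Y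
  omega
end

section
/- For any r-regular graph G and any k with 0 ≤ k ≤ r, the k-limited packing number and the (r−k+1)-tuple domination number satisfy L_k(G) + γ_{×(r−k+1)}(G) = |V(G)|. -/
/-- A set `D` is an `ℓ`-tuple dominating set if `|N[v] ∩ D| ≥ ℓ` for every vertex `v`. -/
def SimpleGraph.IsTupleDominating {V : Type*} (G : SimpleGraph V) (l : ℕ) (D : Set V) : Prop :=
  ∀ v : V, l ≤ (D ∩ G.closedNbhd v).ncard

/-- `γ_{×ℓ}(G)`: the minimum cardinality of an `ℓ`-tuple dominating set of `G`. -/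
noncomputable def SimpleGraph.tupleDominationNumber {V : Type*} (G : SimpleGraph V) (l : ℕ) : ℕ :=
  sInf {n | ∃ D : Set V, G.IsTupleDominating l D ∧ D.ncard = n}

section Aux

variable {V : Type*} [Fintype V] (G : SimpleGraph V) [DecidableRel G.Adj] (r k : ℕ)

lemma aux_closed_card (hreg : G.IsRegularOfDegree r) (v : V) :
    (G.closedNbhd v).ncard = r + 1 := by
  have hv : v ∉ G.neighborSet v := fun h => G.irrefl h
  rw [SimpleGraph.closedNbhd, Set.ncard_insert_of_notMem hv (Set.toFinite _),
    Set.ncard_eq_toFinset_card']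
  rw [Set.toFinset_card, SimpleGraph.card_neighborSet_eq_degree, hreg v]

omit [DecidableRel G.Adj] in
lemma aux_split (X : Set V) (v : V) :
    (X ∩ G.closedNbhd v).ncard + (Xᶜ ∩ G.closedNbhd v).ncard = (G.closedNbhd v).ncard := by
  have : Xᶜ ∩ G.closedNbhd v = G.closedNbhd v \ X := by ext x; simp [and_comm, Set.mem_diff]
  rw [this, Set.inter_comm, Set.ncard_inter_add_ncard_diff_eq_ncard]

lemma aux_iff (hreg : G.IsRegularOfDegree r) (hk : k ≤ r) (X : Set V) :
    G.IsLimitedPacking k X ↔ G.IsTupleDominating (r - k + 1) Xᶜ := by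
  constructor
  · intro h v
    have hs := aux_split G X v
    rw [aux_closed_card G r hreg v] at hs
    have := h v
    omega
  · intro h v
    have hs := aux_split G X v
    rw [aux_closed_card G r hreg v] at hs
    have := h v
    omega

end Aux

/-- For an `r`-regular graph `G` and `0 ≤ k ≤ r`,
`L_k(G) + γ_{×(r-k+1)}(G) = |V(G)|`. -/
theorem stmt9 {V : Type*} [Fintype V] (G : SimpleGraph V) [DecidableRel G.Adj] (r k : ℕ)
    (hreg : G.IsRegularOfDegree r) (hk : k ≤ r) :
    G.limitedPackingNumber k + G.tupleDominationNumber (r - k + 1) = Fintype.card V := by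
  set A := {n | ∃ X : Set V, G.IsLimitedPacking k X ∧ X.ncard = n} with hA
  set B := {n | ∃ D : Set V, G.IsTupleDominating (r - k + 1) D ∧ D.ncard = n} with hB
  have hAne : A.Nonempty := ⟨0, ∅, fun v => by simp, by simp⟩
  have hBne : B.Nonempty := by
    refine ⟨Fintype.card V, Set.univ, ?_, by rw [Set.ncard_univ, Nat.card_eq_fintype_card]⟩
    rw [← Set.compl_empty]
    exact (aux_iff G r k hreg hk ∅).mp (fun v => by simp)
  have hAbdd : BddAbove A := by
    refine ⟨Fintype.card V, fun n hn => ?_⟩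
    obtain ⟨X, _, rfl⟩ := hn
    exact Set.ncard_le_ncard (Set.subset_univ X) (Set.toFinite _) |>.trans (by rw [Set.ncard_univ, Nat.card_eq_fintype_card])
  have hbd : ∀ X : Set V, X.ncard ≤ Fintype.card V := fun X =>
    (Set.ncard_le_ncard (Set.subset_univ X) (Set.toFinite _)).trans (by rw [Set.ncard_univ, Nat.card_eq_fintype_card])
  have hcompl : ∀ X : Set V, X.ncard + Xᶜ.ncard = Fintype.card V := fun X => by
    rw [Set.ncard_add_ncard_compl, Nat.card_eq_fintype_card]
  have haA : G.limitedPackingNumber k ∈ A := Nat.sSup_mem hAne hAbdd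
  have hbB : G.tupleDominationNumber (r - k + 1) ∈ B := Nat.sInf_mem hBne
  obtain ⟨X, hX, hXcard⟩ := haA
  obtain ⟨D, hD, hDcard⟩ := hbB
  have h1 : G.tupleDominationNumber (r - k + 1) ≤ Xᶜ.ncard :=
    Nat.sInf_le ⟨Xᶜ, (aux_iff G r k hreg hk X).mp hX, rfl⟩
  have h2 : Dᶜ.ncard ≤ G.limitedPackingNumber k := by
    refine le_csSup hAbdd ⟨Dᶜ, ?_, rfl⟩
    rw [aux_iff G r k hreg hk, compl_compl]; exact hD
  have e1 := hcompl X
  have e2 := hcompl D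
  have := hbd X
  have := hbd D
  omega
end

section
/- If G is a cubic (3-regular) graph, then |V(G)|/4 ≤ L_2(G) ≤ |V(G)|/2. -/
open Finset

section Aux

variable {V : Type*} [Fintype V] [DecidableEq V] (G : SimpleGraph V) [DecidableRel G.Adj]

/-- Finset version of closed neighbourhood. -/
private def Nf (v : V) : Finset V := insert v (G.neighborFinset v)

private lemma coe_Nf (v : V) : (↑(Nf G v) : Set V) = G.closedNbhd v := by
  simp [Nf, SimpleGraph.closedNbhd, SimpleGraph.neighborFinset, Set.coe_toFinset]

private lemma card_Nf (hreg : G.IsRegularOfDegree 3) (v : V) : (Nf G v).card = 4 := by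
  rw [Nf, Finset.card_insert_of_notMem (by simp)]
  have := hreg v
  simp only [SimpleGraph.degree] at this
  omega

private lemma mem_Nf_comm (x v : V) : x ∈ Nf G v ↔ v ∈ Nf G x := by
  simp only [Nf, Finset.mem_insert, SimpleGraph.mem_neighborFinset]
  constructor
  · rintro (rfl | h)
    · exact Or.inl rfl
    · exact Or.inr h.symm
  · rintro (rfl | h)
    · exact Or.inl rfl
    · exact Or.inr h.symm

private lemma sum_card_inter (hreg : G.IsRegularOfDegree 3) (X : Finset V) :
    ∑ v, (X ∩ Nf G v).card = 4 * X.card := by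
  have h1 : ∀ v, (X ∩ Nf G v).card = ∑ x ∈ X, if v ∈ Nf G x then 1 else 0 := by
    intro v
    rw [← Finset.filter_mem_eq_inter, Finset.card_filter]
    exact Finset.sum_congr rfl fun x _ => if_congr (mem_Nf_comm G x v) rfl rfl
  have key : ∀ s : Finset V, ∑ v, (if v ∈ s then (1:ℕ) else 0) = s.card := by
    intro s
    rw [Finset.sum_ite_mem, Finset.univ_inter, Finset.sum_const, smul_eq_mul, mul_one]
  calc ∑ v, (X ∩ Nf G v).card
      = ∑ v, ∑ x ∈ X, (if v ∈ Nf G x then 1 else 0) := by simp only [h1]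
    _ = ∑ x ∈ X, ∑ v, (if v ∈ Nf G x then 1 else 0) := Finset.sum_comm
    _ = ∑ x ∈ X, (Nf G x).card := Finset.sum_congr rfl fun x _ => key _
    _ = ∑ x ∈ X, 4 := Finset.sum_congr rfl fun x _ => card_Nf G hreg x
    _ = 4 * X.card := by rw [Finset.sum_const, smul_eq_mul, mul_comm]

private lemma lower_bound (hreg : G.IsRegularOfDegree 3) (X : Finset V)
    (hX : ∀ v, (X ∩ Nf G v).card ≤ 2)
    (hmax : ∀ Y : Finset V, (∀ v, (Y ∩ Nf G v).card ≤ 2) → Y.card ≤ X.card) :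
    Fintype.card V ≤ 4 * X.card := by
  classical
  set f : V → ℕ := fun v => (X ∩ Nf G v).card with hf
  -- every undominated vertex has a blocker
  have hblock : ∀ z, f z = 0 → ∃ w, f w = 2 ∧ w ∉ X ∧ z ∈ G.neighborFinset w \ X := by
    intro z hz
    have hzX : z ∉ X := by
      intro h
      have hmem : z ∈ X ∩ Nf G z :=
        Finset.mem_inter.mpr ⟨h, Finset.mem_insert_self _ _⟩
      have := Finset.card_pos.mpr ⟨z, hmem⟩
      simp only [hf] at hz
      omega
    have hnot : ¬ ∀ v, ((insert z X) ∩ Nf G v).card ≤ 2 := by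
      intro hp
      have := hmax (insert z X) hp
      rw [Finset.card_insert_of_notMem hzX] at this
      omega
    push_neg at hnot
    obtain ⟨w, hw⟩ := hnot
    have hzw : z ∈ Nf G w := by
      by_contra h
      rw [Finset.insert_inter_of_notMem h] at hw
      exact absurd (hX w) (by omega)
    rw [Finset.insert_inter_of_mem hzw] at hw
    have hcard := Finset.card_insert_le z (X ∩ Nf G w)
    have hfw : f w = 2 := le_antisymm (hX w) (by simp only [hf]; omega)
    have hwX : w ∉ X := by
      intro h
      have hwz : w ∈ Nf G z := (mem_Nf_comm G z w).mp hzw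
      have hmem : w ∈ X ∩ Nf G z := Finset.mem_inter.mpr ⟨h, hwz⟩
      have := Finset.card_pos.mpr ⟨w, hmem⟩
      simp only [hf] at hz
      omega
    have hzw' : z ≠ w := by
      rintro rfl
      rw [hz] at hfw
      omega
    refine ⟨w, hfw, hwX, Finset.mem_sdiff.mpr ⟨?_, hzX⟩⟩
    rcases Finset.mem_insert.mp hzw with h | h
    · exact absurd h hzw'
    · exact h
  -- a blocker has a unique non-packing neighbour
  have huniq : ∀ w, f w = 2 → w ∉ X → (G.neighborFinset w \ X).card ≤ 1 := by
    intro w hfw hwX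
    have h1 : X ∩ Nf G w = X ∩ G.neighborFinset w := by
      ext x
      simp only [Finset.mem_inter, Nf, Finset.mem_insert]
      constructor
      · rintro ⟨hx, rfl | hx2⟩
        · exact absurd hx hwX
        · exact ⟨hx, hx2⟩
      · rintro ⟨hx, hx2⟩
        exact ⟨hx, Or.inr hx2⟩
    have h2 : (G.neighborFinset w ∩ X).card = 2 := by
      rw [Finset.inter_comm, ← h1]
      exact hfw
    have h3 : (G.neighborFinset w).card = 3 := by
      have := hreg w
      simp only [SimpleGraph.degree] at this
      exact this
    have h4 : (G.neighborFinset w \ X).card + (G.neighborFinset w ∩ X).card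
        = (G.neighborFinset w).card := Finset.card_sdiff_add_card_inter _ _
    omega
  set Z : Finset V := Finset.univ.filter (fun v => f v = 0) with hZ
  set W : Finset V := Finset.univ.filter (fun v => f v = 2) with hW
  have hZW : Z.card ≤ W.card := by
    have h : ∀ z, ∃ w, z ∈ Z → (w ∈ W ∧ w ∉ X ∧ z ∈ G.neighborFinset w \ X) := by
      intro z
      by_cases hz : z ∈ Z
      · obtain ⟨w, h1, h2, h3⟩ := hblock z (by simpa [hZ] using hz)
        exact ⟨w, fun _ => ⟨by simp [hW, h1], h2, h3⟩⟩
      · exact ⟨z, fun h => absurd h hz⟩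
    choose g hg using h
    apply Finset.card_le_card_of_injOn g (fun z hz => (hg z hz).1)
    intro z1 h1 z2 h2 heq
    simp only [Finset.mem_coe] at h1 h2
    obtain ⟨hw1, hnx1, hmem1⟩ := hg z1 h1
    obtain ⟨hw2, hnx2, hmem2⟩ := hg z2 h2
    rw [heq] at hmem1
    have hu := huniq (g z2) (by simpa [hW] using hw2) hnx2
    exact Finset.card_le_one.mp hu _ hmem1 _ hmem2
  -- counting
  have key : ∀ s : Finset V, ∑ v, (if v ∈ s then (1:ℕ) else 0) = s.card := by
    intro s
    rw [Finset.sum_ite_mem, Finset.univ_inter, Finset.sum_const, smul_eq_mul, mul_one]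
  have e0 : ∀ s : Finset V,
      (∑ v, if v ∈ s then (0:ℕ) else 1) + s.card = Fintype.card V := by
    intro s
    rw [← key s, ← Finset.sum_add_distrib]
    calc ∑ v, ((if v ∈ s then (0:ℕ) else 1) + (if v ∈ s then 1 else 0))
        = ∑ _v : V, 1 := Finset.sum_congr rfl fun v _ => by
          by_cases h : v ∈ s <;> simp [h]
      _ = Fintype.card V := by simp
  have hpt : ∀ v, (if v ∈ Z then (0:ℕ) else 1) + (if v ∈ W then 1 else 0) ≤ f v := by
    intro v
    have h2 : f v ≤ 2 := hX v
    have hz : v ∈ Z ↔ f v = 0 := by simp [hZ]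
    have hw : v ∈ W ↔ f v = 2 := by simp [hW]
    by_cases h0 : v ∈ Z <;> by_cases h1 : v ∈ W <;>
      simp only [h0, h1, if_true, if_false] <;>
      (rw [hz] at h0; rw [hw] at h1; omega)
  have hsum := sum_card_inter G hreg X
  have hsum2 : ∑ v, ((if v ∈ Z then (0:ℕ) else 1) + (if v ∈ W then 1 else 0))
      ≤ 4 * X.card := by
    rw [← hsum]
    exact Finset.sum_le_sum fun v _ => hpt v
  rw [Finset.sum_add_distrib] at hsum2
  have e1 := e0 Z
  have e2 := key W
  omega

private lemma pack_coe (Y : Finset V) :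
    G.IsLimitedPacking 2 (↑Y : Set V) ↔ ∀ v, (Y ∩ Nf G v).card ≤ 2 := by
  unfold SimpleGraph.IsLimitedPacking
  refine forall_congr' fun v => ?_
  rw [← coe_Nf, ← Finset.coe_inter, Set.ncard_coe_finset]

end Aux

/-- For any cubic graph `G`, `|V(G)|/4 ≤ L_2(G) ≤ |V(G)|/2`. -/
theorem stmt13 {V : Type*} [Fintype V] (G : SimpleGraph V) [DecidableRel G.Adj]
    (hreg : G.IsRegularOfDegree 3) :
    Fintype.card V ≤ 4 * G.limitedPackingNumber 2 ∧
      2 * G.limitedPackingNumber 2 ≤ Fintype.card V := by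
  classical
  set S : Set ℕ := {n | ∃ X : Set V, G.IsLimitedPacking 2 X ∧ X.ncard = n} with hS
  have hLP : G.limitedPackingNumber 2 = sSup S := rfl
  have hne : S.Nonempty := ⟨0, ∅, fun v => by simp [SimpleGraph.IsLimitedPacking], by simp⟩
  have hbdd : BddAbove S := by
    refine ⟨Fintype.card V, fun k hk => ?_⟩
    obtain ⟨X, _, rfl⟩ := hk
    have := Set.ncard_le_ncard (Set.subset_univ X) Set.finite_univ
    simpa [Set.ncard_univ] using this
  have hmem : sSup S ∈ S := Nat.sSup_mem hne hbdd
  obtain ⟨X, hXp, hXc⟩ := hmem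
  set Xf : Finset V := X.toFinite.toFinset with hXfdef
  have hcoe : (↑Xf : Set V) = X := Set.Finite.coe_toFinset _
  have hXfc : Xf.card = G.limitedPackingNumber 2 := by
    rw [hLP, ← hXc, Set.ncard_eq_toFinset_card X X.toFinite]
  have hXfp : ∀ v, (Xf ∩ Nf G v).card ≤ 2 :=
    (pack_coe G Xf).mp (by rwa [hcoe])
  have hmax : ∀ Y : Finset V, (∀ v, (Y ∩ Nf G v).card ≤ 2) → Y.card ≤ Xf.card := by
    intro Y hY
    rw [hXfc, hLP]
    exact le_csSup hbdd ⟨↑Y, (pack_coe G Y).mpr hY, Set.ncard_coe_finset Y⟩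
  constructor
  · rw [← hXfc]
    exact lower_bound G hreg Xf hXfp hmax
  · have h4 := sum_card_inter G hreg Xf
    have hle : ∑ v, (Xf ∩ Nf G v).card ≤ ∑ _v : V, 2 :=
      Finset.sum_le_sum fun v _ => hXfp v
    have hconst : ∑ _v : V, 2 = 2 * Fintype.card V := by
      simp [Finset.sum_const, Finset.card_univ, mul_comm]
    rw [← hXfc]
    omega
end

section
/- For any finite graph G with minimum degree δ(G) and any k ≥ 0, the k-limited packing number satisfies L_k(G) ≤ k·|V(G)|/(δ(G) + 1). -/
open Finset in
lemma key14 {V : Type*} [Fintype V] (G : SimpleGraph V) [DecidableRel G.Adj] (k : ℕ)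
    (X : Set V) (hX : G.IsLimitedPacking k X) :
    (G.minDegree + 1) * X.ncard ≤ k * Fintype.card V := by
  classical
  set N : V → Finset V := fun v => insert v (G.neighborFinset v) with hN
  have hsymm : ∀ v x : V, x ∈ N v ↔ v ∈ N x := by
    intro v x
    simp only [hN, mem_insert, SimpleGraph.mem_neighborFinset]
    constructor
    · rintro (h | h); · exact Or.inl h.symm
      · exact Or.inr h.symm
    · rintro (h | h); · exact Or.inl h.symm
      · exact Or.inr h.symm
  have hcardN : ∀ v : V, (N v).card = G.degree v + 1 := by
    intro v
    rw [hN]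
    rw [Finset.card_insert_of_notMem (by simp), SimpleGraph.card_neighborFinset_eq_degree]
  have hncard : ∀ v : V, (X ∩ G.closedNbhd v).ncard = (X.toFinset ∩ N v).card := by
    intro v
    rw [Set.ncard_eq_toFinset_card']
    congr 1
    ext x
    simp [hN, SimpleGraph.closedNbhd, and_comm, Set.mem_toFinset, Set.mem_inter_iff, Set.mem_insert_iff, SimpleGraph.mem_neighborSet]
    simp only [Set.toFinset, Finset.mem_map]
    constructor
    · rintro ⟨⟨a, ha⟩, -, rfl⟩; exact ha
    · intro h; exact ⟨⟨x, h⟩, Fintype.complete (self := _) _, rfl⟩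
  calc (G.minDegree + 1) * X.ncard
      = ∑ x ∈ X.toFinset, (G.minDegree + 1) := by
        rw [Finset.sum_const, Set.ncard_eq_toFinset_card', mul_comm, smul_eq_mul]
    _ ≤ ∑ x ∈ X.toFinset, (N x).card := by
        refine Finset.sum_le_sum fun x _ => ?_
        rw [hcardN]
        exact Nat.add_le_add_right (G.minDegree_le_degree x) 1
    _ = ∑ x ∈ X.toFinset, ∑ v ∈ Finset.univ, (if v ∈ N x then 1 else 0) := by
        refine Finset.sum_congr rfl fun x _ => ?_
        rw [Finset.sum_ite_mem, Finset.univ_inter, Finset.sum_const, smul_eq_mul, mul_one]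
    _ = ∑ v ∈ Finset.univ, ∑ x ∈ X.toFinset, (if x ∈ N v then 1 else 0) := by
        rw [Finset.sum_comm]
        exact Finset.sum_congr rfl fun v _ => Finset.sum_congr rfl fun x _ => by
          rw [if_congr (hsymm v x) rfl rfl]
    _ = ∑ v ∈ Finset.univ, (X.toFinset ∩ N v).card := by
        refine Finset.sum_congr rfl fun v _ => ?_
        rw [Finset.sum_ite_mem, Finset.sum_const, smul_eq_mul, mul_one]
    _ ≤ ∑ v ∈ (Finset.univ : Finset V), k := by
        refine Finset.sum_le_sum fun v _ => ?_
        rw [← hncard]; exact hX v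
    _ = k * Fintype.card V := by rw [Finset.sum_const, smul_eq_mul, mul_comm, Finset.card_univ]

/-- For any finite graph `G` and `k ≥ 0`, `L_k(G) ≤ k · |V(G)| / (δ(G) + 1)`. -/
theorem stmt14 {V : Type*} [Fintype V] (G : SimpleGraph V) [DecidableRel G.Adj] (k : ℕ) :
    (G.minDegree + 1) * G.limitedPackingNumber k ≤ k * Fintype.card V := by
  classical
  have hbdd : ∀ n ∈ {n | ∃ X : Set V, G.IsLimitedPacking k X ∧ X.ncard = n},
      (G.minDegree + 1) * n ≤ k * Fintype.card V := by
    rintro n ⟨X, hX, rfl⟩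
    exact key14 G k X hX
  have hsup : G.limitedPackingNumber k ∈
      {n | ∃ X : Set V, G.IsLimitedPacking k X ∧ X.ncard = n} ∨
      G.limitedPackingNumber k = 0 := by
    by_cases h : {n | ∃ X : Set V, G.IsLimitedPacking k X ∧ X.ncard = n}.Nonempty ∧
        BddAbove {n | ∃ X : Set V, G.IsLimitedPacking k X ∧ X.ncard = n}
    · exact Or.inl (Nat.sSup_mem h.1 h.2)
    · right
      unfold SimpleGraph.limitedPackingNumber
      rcases not_and_or.mp h with h1 | h2
      · rw [Set.not_nonempty_iff_eq_empty.mp h1, csSup_empty]; rfl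
      · rw [csSup_of_not_bddAbove h2, csSup_empty]; rfl
  rcases hsup with h | h
  · exact hbdd _ h
  · rw [h, mul_zero]; exact Nat.zero_le _
end

section
/- Let q be a prime power and k ≥ 1, and let G_{q,k} be the graph whose vertices are the points of the projective space PG(k+1, q) (equivalence classes of nonzero vectors in GF(q)^{k+2} under scalar multiplication), with two vertices adjacent if representative vectors have inner product 0. Then any set of k+1 vertices of G_{q,k} fails to be a k-limited packing; consequently L_k(G_{q,k}) = k. -/
/-- The graph `G_{q,k}` on the points of the projective space `PG(k+1, q)`
(one-dimensional subspaces of `GF(q)^{k+2}`), where two points are adjacent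
when representative vectors have inner product `0`. -/
noncomputable def projOrthGraph (F : Type*) [Field F] (k : ℕ) :
    SimpleGraph (Projectivization F (Fin (k + 2) → F)) :=
  SimpleGraph.fromRel (fun x y => ∑ i, x.rep i * y.rep i = 0)

lemma single_ne_zero' {F : Type*} [Field F] {n : ℕ} (i : Fin n) :
    (Pi.single i (1 : F)) ≠ (0 : Fin n → F) := fun h =>
  (one_ne_zero : (1:F) ≠ 0) (by simpa using congrFun h i)

open Projectivization in
lemma key_lemma (F : Type*) [Field F] (k : ℕ)
    (X : Set (Projectivization F (Fin (k + 2) → F)))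
    (hX : X.Finite) (hcard : X.ncard ≤ k + 1) :
    ∃ v, X ⊆ (projOrthGraph F k).closedNbhd v := by
  haveI := hX.fintype
  let f : (Fin (k + 2) → F) →ₗ[F] (X → F) :=
    LinearMap.pi fun x =>
      ∑ i, (x : Projectivization F (Fin (k + 2) → F)).rep i • LinearMap.proj i
  have hlt : Module.finrank F (X → F) < Module.finrank F (Fin (k + 2) → F) := by
    rw [Module.finrank_fintype_fun_eq_card, Module.finrank_fintype_fun_eq_card,
      Fintype.card_fin, ← Nat.card_eq_fintype_card, Nat.card_coe_set_eq]
    omega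
  have hker := LinearMap.ker_ne_bot_of_finrank_lt (f := f) hlt
  obtain ⟨w, hwker, hw⟩ := (Submodule.ne_bot_iff _).mp hker
  have hfw : ∀ x : X, ∑ i, (x : Projectivization F (Fin (k + 2) → F)).rep i * w i = 0 := by
    intro x
    have := congrFun (LinearMap.mem_ker.mp hwker) x
    simpa [f, LinearMap.pi_apply, LinearMap.sum_apply, LinearMap.smul_apply,
      LinearMap.proj_apply, smul_eq_mul] using this
  refine ⟨Projectivization.mk F w hw, ?_⟩
  set v := Projectivization.mk F w hw with hv
  obtain ⟨a, ha⟩ := (mk_eq_mk_iff F w v.rep hw v.rep_nonzero).mp (by rw [mk_rep])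
  intro x hx
  have hort : ∑ i, x.rep i * v.rep i = 0 := by
    have h0 : ∑ i, x.rep i * ((a : F) * v.rep i) = 0 := by
      have := hfw ⟨x, hx⟩
      simpa [← ha, Pi.smul_apply, Units.smul_def, smul_eq_mul] using this
    have : (a : F) * ∑ i, x.rep i * v.rep i = 0 := by
      rw [Finset.mul_sum, ← h0]
      exact Finset.sum_congr rfl fun i _ => by ring
    exact (mul_eq_zero.mp this).resolve_left a.ne_zero
  by_cases hxv : x = v
  · exact hxv ▸ Set.mem_insert _ _
  · refine Set.mem_insert_of_mem _ ?_
    show (projOrthGraph F k).Adj v x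
    rw [projOrthGraph, SimpleGraph.fromRel_adj]
    exact ⟨fun h => hxv h.symm, Or.inr hort⟩

/-- Any `k+1` vertices of `G_{q,k}` fail to be a `k`-limited packing;
consequently `L_k(G_{q,k}) = k`. -/
theorem stmt15 (F : Type*) [Field F] [Fintype F] (k : ℕ) (hk : 1 ≤ k) :
    (∀ X : Set (Projectivization F (Fin (k + 2) → F)),
        X.ncard = k + 1 → ¬ (projOrthGraph F k).IsLimitedPacking k X) ∧
      (projOrthGraph F k).limitedPackingNumber k = k := by
  haveI : Finite (Projectivization F (Fin (k + 2) → F)) := Quotient.finite _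
  have part1 : ∀ X : Set (Projectivization F (Fin (k + 2) → F)),
      X.ncard = k + 1 → ¬ (projOrthGraph F k).IsLimitedPacking k X := by
    intro X hX hpack
    obtain ⟨v, hv⟩ := key_lemma F k X (Set.toFinite X) (le_of_eq hX)
    have := hpack v
    rw [Set.inter_eq_self_of_subset_left hv, hX] at this
    omega
  refine ⟨part1, ?_⟩
  -- existence of a k-element set
  have e_inj : Function.Injective (fun i : Fin (k + 2) =>
      Projectivization.mk F (Pi.single i (1 : F)) (single_ne_zero' _)) := by
    intro i j hij
    obtain ⟨a, ha⟩ := (Projectivization.mk_eq_mk_iff F _ _ _ _).mp hij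
    by_contra hne
    have := congrFun ha i
    simp [Pi.single_eq_of_ne hne, Pi.single_eq_same] at this
  set g : Fin k → Projectivization F (Fin (k + 2) → F) :=
    fun i => Projectivization.mk F (Pi.single (Fin.castLE (by omega) i) (1 : F))
      (single_ne_zero' _) with hg
  have g_inj : Function.Injective g := fun i j h => by
    have := e_inj h
    exact Fin.castLE_injective _ this
  set X₀ : Set (Projectivization F (Fin (k + 2) → F)) := Set.range g with hX₀
  have hX₀card : X₀.ncard = k := by
    rw [hX₀, ← Set.image_univ, Set.ncard_image_of_injective _ g_inj, Set.ncard_univ,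
      Nat.card_eq_fintype_card, Fintype.card_fin]
  have hmem : k ∈ {n | ∃ X, (projOrthGraph F k).IsLimitedPacking k X ∧ X.ncard = n} := by
    refine ⟨X₀, fun v => ?_, hX₀card⟩
    calc (X₀ ∩ (projOrthGraph F k).closedNbhd v).ncard ≤ X₀.ncard :=
          Set.ncard_le_ncard Set.inter_subset_left (Set.toFinite _)
      _ = k := hX₀card
  have hub : ∀ n ∈ {n | ∃ X, (projOrthGraph F k).IsLimitedPacking k X ∧ X.ncard = n}, n ≤ k := by
    rintro n ⟨X, hpack, rfl⟩
    by_contra h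
    obtain ⟨Y, hYX, hY⟩ := Set.exists_subset_card_eq (show k + 1 ≤ X.ncard by omega)
    refine part1 Y hY fun v => ?_
    calc (Y ∩ (projOrthGraph F k).closedNbhd v).ncard
        ≤ (X ∩ (projOrthGraph F k).closedNbhd v).ncard :=
          Set.ncard_le_ncard (Set.inter_subset_inter_left _ hYX) (Set.toFinite _)
      _ ≤ k := hpack v
  exact le_antisymm (csSup_le ⟨k, hmem⟩ hub) (le_csSup ⟨k, hub⟩ hmem)
end

section
/- For n divisible by 6, the disjoint union of n/6 copies of H_6 (the 6-cycle with all three long chords) is a cubic graph G on n vertices with L_2(G) = n/3. -/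
/-- `H_6`: the 6-cycle `0-1-2-3-4-5-0` together with the three long chords
`{0,3}, {1,4}, {2,5}` (the circulant graph `C_6(1,3)`). -/
def H6 : SimpleGraph (Fin 6) :=
  SimpleGraph.fromRel (fun i j => (j : ℕ) = ((i : ℕ) + 1) % 6 ∨ (j : ℕ) = ((i : ℕ) + 3) % 6)

/-- The disjoint union of `m` copies of `H_6`. -/
def manyH6 (m : ℕ) : SimpleGraph (Fin m × Fin 6) where
  Adj x y := x.1 = y.1 ∧ H6.Adj x.2 y.2
  symm := by
    constructor
    rintro x y ⟨h1, h2⟩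
    exact ⟨h1.symm, h2.symm⟩
  loopless := by
    constructor
    rintro x ⟨-, h⟩
    exact H6.irrefl h

noncomputable instance (m : ℕ) : (manyH6 m).LocallyFinite :=
  fun _ => Fintype.ofFinite _

instance : DecidableRel H6.Adj := fun a b =>
  decidable_of_iff _ (SimpleGraph.fromRel_adj _ a b).symm

lemma h6core : ∀ X : Finset (Fin 6),
    (∀ v : Fin 6, (X.filter (fun x => x = v ∨ H6.Adj v x)).card ≤ 2) → X.card ≤ 2 := by decide

lemma h6deg : ∀ a : Fin 6, H6.degree a = 3 := by decide

lemma mk_inj {m : ℕ} (i : Fin m) : Function.Injective (Prod.mk i : Fin 6 → Fin m × Fin 6) := by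
  intro a b h; exact congrArg Prod.snd h

/-- For `n` divisible by 6, the disjoint union of `n/6` copies of `H_6` is a cubic
graph on `n` vertices with `L_2 = n/3`. -/
theorem stmt19 (n m : ℕ) (hnm : n = 6 * m) :
    (manyH6 m).IsRegularOfDegree 3 ∧
      3 * (manyH6 m).limitedPackingNumber 2 = n := by
  constructor
  · rintro ⟨i, a⟩
    have hset : (manyH6 m).neighborSet (i, a) = Prod.mk i '' H6.neighborSet a := by
      ext ⟨j, b⟩
      simp only [SimpleGraph.mem_neighborSet, Set.mem_image]
      constructor
      · rintro ⟨h1, h2⟩; exact ⟨b, h2, Prod.ext h1 rfl⟩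
      · rintro ⟨c, hc, h⟩
        obtain ⟨rfl, rfl⟩ : i = j ∧ c = b := by
          exact ⟨congrArg Prod.fst h, congrArg Prod.snd h⟩
        exact ⟨rfl, hc⟩
    have h1 : (manyH6 m).degree (i, a) = ((manyH6 m).neighborSet (i, a)).ncard := by
      rw [← SimpleGraph.card_neighborSet_eq_degree, ← Nat.card_coe_set_eq,
        Nat.card_eq_fintype_card]
    rw [h1, hset, Set.ncard_image_of_injective _ (mk_inj i), ← Nat.card_coe_set_eq,
      Nat.card_eq_fintype_card, SimpleGraph.card_neighborSet_eq_degree, h6deg]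
  · have key : (manyH6 m).limitedPackingNumber 2 = 2 * m := by
      apply IsGreatest.csSup_eq
      constructor
      · -- membership: explicit packing
        refine ⟨(↑((Finset.univ : Finset (Fin m)) ×ˢ ({0, 1} : Finset (Fin 6))) : Set (Fin m × Fin 6)), ?_, ?_⟩
        · rintro ⟨i, a⟩
          have hsub : (↑((Finset.univ : Finset (Fin m)) ×ˢ ({0, 1} : Finset (Fin 6))) : Set (Fin m × Fin 6)) ∩
              (manyH6 m).closedNbhd (i, a) ⊆ {(i, 0), (i, 1)} := by
            rintro ⟨j, b⟩ ⟨hb, hnb⟩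
            have hj : j = i := by
              rcases hnb with h | h
              · exact (congrArg Prod.fst h)
              · exact (h.1).symm
            simp only [Finset.coe_product, Set.mem_prod, Finset.coe_insert, Finset.coe_singleton,
              Set.mem_insert_iff, Set.mem_singleton_iff] at hb
            rcases hb.2 with h | h <;> simp [hj, h]
          calc _ ≤ ({(i, 0), (i, 1)} : Set (Fin m × Fin 6)).ncard :=
                Set.ncard_le_ncard hsub (Set.toFinite _)
            _ ≤ 2 := by
                refine le_trans (Set.ncard_insert_le _ _) ?_
                rw [Set.ncard_singleton]
        · rw [Set.ncard_coe_finset, Finset.card_product]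
          simp [mul_comm]
      · -- upper bound
        rintro k ⟨X, hX, rfl⟩
        have hfin : X.Finite := Set.toFinite X
        rw [Set.ncard_eq_toFinset_card X hfin]
        set F := hfin.toFinset with hF
        have hsum : F.card = ∑ i : Fin m, (F.filter (fun p => p.1 = i)).card :=
          Finset.card_eq_sum_card_fiberwise (fun p _ => Finset.mem_univ p.1)
        rw [hsum]
        have hbound : ∀ i : Fin m, (F.filter (fun p => p.1 = i)).card ≤ 2 := by
          intro i
          set Gi := (F.filter (fun p => p.1 = i)).image Prod.snd with hGi
          have hcardGi : (F.filter (fun p => p.1 = i)).card = Gi.card := by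
            rw [hGi, Finset.card_image_of_injOn]
            intro p hp q hq hpq
            simp only [Finset.mem_coe, Finset.mem_filter] at hp hq
            exact Prod.ext (hp.2.trans hq.2.symm) hpq
          rw [hcardGi]
          apply h6core
          intro v
          have hinj : ∀ b ∈ Gi.filter (fun x => x = v ∨ H6.Adj v x),
              (i, b) ∈ X ∩ (manyH6 m).closedNbhd (i, v) := by
            intro b hb
            simp only [Finset.mem_filter, hGi, Finset.mem_image] at hb
            obtain ⟨⟨p, hp, hpb⟩, hbv⟩ := hb
            simp only [Finset.mem_filter, hF, Set.Finite.mem_toFinset] at hp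
            have hpX : (i, b) ∈ X := by
              have : p = (i, b) := Prod.ext hp.2 hpb
              rw [← this]; exact hp.1
            refine ⟨hpX, ?_⟩
            rcases hbv with rfl | hadj
            · exact Set.mem_insert _ _
            · exact Set.mem_insert_of_mem _ ⟨rfl, hadj⟩
          calc (Gi.filter (fun x => x = v ∨ H6.Adj v x)).card
              = ((Gi.filter (fun x => x = v ∨ H6.Adj v x)).image (Prod.mk i)).card := by
                rw [Finset.card_image_of_injective _ (mk_inj i)]
            _ ≤ (X ∩ (manyH6 m).closedNbhd (i, v)).ncard := by
                rw [Set.ncard_eq_toFinset_card _ ((Set.toFinite _))]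
                apply Finset.card_le_card
                intro q hq
                simp only [Finset.mem_image] at hq
                obtain ⟨b, hb, rfl⟩ := hq
                simpa [Set.Finite.mem_toFinset] using hinj b hb
            _ ≤ 2 := hX (i, v)
        calc ∑ i : Fin m, (F.filter (fun p => p.1 = i)).card ≤ ∑ _i : Fin m, 2 :=
              Finset.sum_le_sum (fun i _ => hbound i)
          _ = 2 * m := by simp [mul_comm]
    rw [key]; omega
end
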